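/- Let (φ_m)_{m≥1} be continuous functions φ_m : ℝ → ℝ, fix m ∈ ℕ, and assume the compact-embedding property: every sequence (u_j) of functions in C^{m+1}(ℝ) with q_{φ_{m+1},m+1}(u_j) ≤ 1 for all j has a subsequence that converges with respect to the norm q_{φ_m,m} to some u ∈ C^m(ℝ) with q_{φ_m,m}(u) < ∞. Let (c_k^{(m)})_{k≥1} and (c_k^{(m+1)})_{k≥1} be sequences of positive numbers with Σ_{k=1}^∞ c_k^{(m)}/c_k^{(m+1)} < ∞. For a sequence f = (f_1, f_2, …) of functions on ℝ set p_m(f) = Σ_{k=1}^∞ c_k^{(m)} q_{φ_m,m}(f_k) and p_{m+1}(f) = Σ_{k=1}^∞ c_k^{(m+1)} q_{φ_{m+1},m+1}(f_k). Then for every r > 0, every sequence (f^{(j)})_{j≥1} with each f^{(j)}_k ∈ C^{m+1}(ℝ) and p_{m+1}(f^{(j)}) ≤ r for all j has a subsequence that is Cauchy with respect to p_m; that is, the ball {f : p_{m+1}(f) ≤ r} is relatively compact for the norm p_m (the embedding T_{m+1} → T_m is completely continuous). -/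

import Mathlib

open Real Set Filter

/-- The weighted seminorm `q_{φ,m}(g) = sup_{x ∈ ℝ, 0 ≤ k ≤ m} |g^{(k)}(x)| e^{-φ(x)}`,
valued in `ℝ≥0∞` so that it is always defined. -/
noncomputable def qSeminorm (φ : ℝ → ℝ) (m : ℕ) (g : ℝ → ℂ) : ENNReal :=
  ⨆ (k : ℕ) (_ : k ≤ m) (x : ℝ),
    (‖iteratedDeriv k g x‖₊ : ENNReal) * ENNReal.ofReal (Real.exp (-(φ x)))

lemma le_qSeminorm (φ : ℝ → ℝ) (m : ℕ) (g : ℝ → ℂ) {k : ℕ} (hk : k ≤ m) (x : ℝ) :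
    (‖iteratedDeriv k g x‖₊ : ENNReal) * ENNReal.ofReal (Real.exp (-(φ x))) ≤ qSeminorm φ m g :=
  le_iSup_of_le k (le_iSup_of_le hk (le_iSup_of_le x le_rfl))

lemma qSeminorm_neg (φ : ℝ → ℝ) (m : ℕ) (g : ℝ → ℂ) :
    qSeminorm φ m (fun x => -g x) = qSeminorm φ m g := by
  unfold qSeminorm
  refine iSup_congr fun k => iSup_congr fun hk => iSup_congr fun x => ?_
  rw [show (fun x => -g x) = -g from rfl, iteratedDeriv_neg, nnnorm_neg]

lemma qSeminorm_add_le (φ : ℝ → ℝ) (n : ℕ) (f g : ℝ → ℂ)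
    (hf : ContDiff ℝ n f) (hg : ContDiff ℝ n g) :
    qSeminorm φ n (fun x => f x + g x) ≤ qSeminorm φ n f + qSeminorm φ n g := by
  refine iSup_le fun k => iSup_le fun hk => iSup_le fun x => ?_
  have hk' : (k : WithTop ℕ∞) ≤ n := by exact_mod_cast hk
  have hD : iteratedDeriv k (fun x => f x + g x) x
      = iteratedDeriv k f x + iteratedDeriv k g x := by
    have := iteratedDerivWithin_add (Set.mem_univ x) uniqueDiffOn_univ
      ((hf.of_le hk').contDiffWithinAt) ((hg.of_le hk').contDiffWithinAt)
    exact (by simpa [iteratedDerivWithin_univ] using this : iteratedDeriv k (f + g) x = _)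
  rw [hD]
  calc (‖iteratedDeriv k f x + iteratedDeriv k g x‖₊ : ENNReal)
        * ENNReal.ofReal (Real.exp (-(φ x)))
      ≤ ((‖iteratedDeriv k f x‖₊ : ENNReal) + ‖iteratedDeriv k g x‖₊)
        * ENNReal.ofReal (Real.exp (-(φ x))) := by
        gcongr
        exact_mod_cast nnnorm_add_le _ _
    _ = (‖iteratedDeriv k f x‖₊ : ENNReal) * ENNReal.ofReal (Real.exp (-(φ x)))
        + (‖iteratedDeriv k g x‖₊ : ENNReal) * ENNReal.ofReal (Real.exp (-(φ x))) := by
        rw [add_mul]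
    _ ≤ _ := add_le_add (le_qSeminorm φ n f hk x) (le_qSeminorm φ n g hk x)

lemma qSeminorm_sub_le (φ : ℝ → ℝ) (n : ℕ) (f g : ℝ → ℂ)
    (hf : ContDiff ℝ n f) (hg : ContDiff ℝ n g) :
    qSeminorm φ n (fun x => f x - g x) ≤ qSeminorm φ n f + qSeminorm φ n g := by
  have : (fun x => f x - g x) = fun x => f x + (-g x) := by funext x; ring
  rw [this]
  calc qSeminorm φ n (fun x => f x + (-g x))
      ≤ qSeminorm φ n f + qSeminorm φ n (fun x => -g x) :=
        qSeminorm_add_le φ n f (fun x => -g x) hf hg.neg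
    _ = _ := by rw [qSeminorm_neg]

lemma qSeminorm_smul (φ : ℝ → ℝ) (n : ℕ) {t : ℝ} (ht : 0 ≤ t) (g : ℝ → ℂ)
    (hg : ContDiff ℝ n g) :
    qSeminorm φ n (fun x => t • g x) = ENNReal.ofReal t * qSeminorm φ n g := by
  unfold qSeminorm
  rw [ENNReal.mul_iSup]
  refine iSup_congr fun k => ?_
  rw [ENNReal.mul_iSup]
  refine iSup_congr fun hk => ?_
  rw [ENNReal.mul_iSup]
  refine iSup_congr fun x => ?_
  have hk' : (k : WithTop ℕ∞) ≤ n := by exact_mod_cast hk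
  have hD : iteratedDeriv k (fun x => t • g x) x = t • iteratedDeriv k g x := by
    have := iteratedDerivWithin_const_smul (Set.mem_univ x) uniqueDiffOn_univ t
      ((hg.of_le hk').contDiffWithinAt)
    simpa [iteratedDerivWithin_univ] using this
  rw [hD, nnnorm_smul]
  push_cast
  rw [show (‖t‖₊ : ENNReal) = ENNReal.ofReal t from Real.enorm_eq_ofReal ht]
  ring


lemma exists_diagonal (P : ℕ → (ℕ → ℕ) → Prop)
    (hP : ∀ k (θ : ℕ → ℕ), StrictMono θ → ∃ σ : ℕ → ℕ, StrictMono σ ∧ P k (fun j => θ (σ j))) :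
    ∃ ψ : ℕ → ℕ, StrictMono ψ ∧
      ∀ k, ∃ θ : ℕ → ℕ, P k θ ∧ ∀ j, k ≤ j → ∃ i, j ≤ i ∧ ψ j = θ i := by
  choose σ hσm hσP using hP
  let Θ : ℕ → {f : ℕ → ℕ // StrictMono f} :=
    fun n => Nat.rec
      ⟨fun j => σ 0 id strictMono_id j, hσm 0 id strictMono_id⟩
      (fun k p => ⟨fun j => p.1 (σ (k+1) p.1 p.2 j), p.2.comp (hσm (k+1) p.1 p.2)⟩) n
  have hC : ∀ k, P k (Θ k).1 := by
    intro k
    cases k with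
    | zero => exact hσP 0 id strictMono_id
    | succ k => exact hσP (k+1) (Θ k).1 (Θ k).2
  have hsucc : ∀ k, ∀ j, (Θ (k+1)).1 j = (Θ k).1 (σ (k+1) (Θ k).1 (Θ k).2 j) := fun k j => rfl
  refine ⟨fun j => (Θ j).1 j, ?_, ?_⟩
  · apply strictMono_nat_of_lt_succ
    intro j
    calc (Θ j).1 j < (Θ j).1 (j+1) := (Θ j).2 (Nat.lt_succ_self j)
      _ ≤ (Θ j).1 (σ (j+1) (Θ j).1 (Θ j).2 (j+1)) :=
        (Θ j).2.monotone ((hσm (j+1) (Θ j).1 (Θ j).2).le_apply)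
      _ = (Θ (j+1)).1 (j+1) := (hsucc j (j+1)).symm
  · intro k
    have hshift : ∀ d, ∃ τ : ℕ → ℕ, (∀ i, i ≤ τ i) ∧ ∀ j, (Θ (k+d)).1 j = (Θ k).1 (τ j) := by
      intro d
      induction d with
      | zero => exact ⟨id, fun i => le_rfl, fun j => rfl⟩
      | succ d ih =>
        obtain ⟨τ, hτ, hτe⟩ := ih
        refine ⟨fun j => τ (σ (k+d+1) (Θ (k+d)).1 (Θ (k+d)).2 j), ?_, ?_⟩
        · intro i
          exact le_trans (hσm (k+d+1) (Θ (k+d)).1 (Θ (k+d)).2).le_apply (hτ _)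
        · intro j
          rw [show k + (d+1) = (k+d)+1 from rfl, hsucc (k+d) j, hτe]
    refine ⟨(Θ k).1, hC k, ?_⟩
    intro j hkj
    obtain ⟨τ, hτ, hτe⟩ := hshift (j - k)
    refine ⟨τ j, le_trans (le_refl j) (hτ j), ?_⟩
    have : k + (j - k) = j := Nat.add_sub_cancel' hkj
    rw [← hτe j, this]

lemma exists_embedding_bound (φm φm1 : ℝ → ℝ) (m : ℕ)
    (hcompact : ∀ u : ℕ → ℝ → ℂ,
      (∀ j, ContDiff ℝ (m + 1) (u j)) →
      (∀ j, qSeminorm φm1 (m + 1) (u j) ≤ 1) →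
      ∃ ψ : ℕ → ℕ, StrictMono ψ ∧ ∃ v : ℝ → ℂ, ContDiff ℝ m v ∧
        qSeminorm φm m v < ⊤ ∧
        Tendsto (fun j => qSeminorm φm m (fun x => u (ψ j) x - v x)) atTop (nhds 0)) :
    ∃ C : ENNReal, C ≠ ⊤ ∧ ∀ u : ℝ → ℂ, ContDiff ℝ (m+1) u →
      qSeminorm φm1 (m+1) u ≤ 1 → qSeminorm φm m u ≤ C := by
  by_contra h
  push_neg at h
  have h' : ∀ n : ℕ, ∃ u : ℝ → ℂ, ContDiff ℝ (m+1) u ∧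
      qSeminorm φm1 (m+1) u ≤ 1 ∧ (n : ENNReal) < qSeminorm φm m u := by
    intro n
    obtain ⟨u, hu1, hu2, hu3⟩ := h n (ENNReal.natCast_ne_top n)
    exact ⟨u, hu1, hu2, hu3⟩
  choose u hu h1 h2 using h'
  obtain ⟨ψ, hψ, v, hv, hvfin, htend⟩ := hcompact u hu h1
  have hev : ∀ᶠ j in atTop, qSeminorm φm m (fun x => u (ψ j) x - v x) < 1 :=
    htend.eventually_lt_const one_pos
  obtain ⟨J, hJ⟩ := eventually_atTop.mp hev
  obtain ⟨n, hn⟩ := ENNReal.exists_nat_gt (show 1 + qSeminorm φm m v ≠ ⊤ by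
    simp [hvfin.ne])
  set j := max n J with hj
  have hbound : qSeminorm φm m (u (ψ j)) ≤ 1 + qSeminorm φm m v := by
    have heq : u (ψ j) = fun x => (u (ψ j) x - v x) + v x := by
      funext x; ring
    calc qSeminorm φm m (u (ψ j)) = qSeminorm φm m (fun x => (u (ψ j) x - v x) + v x) := by
          rw [← heq]
      _ ≤ qSeminorm φm m (fun x => u (ψ j) x - v x) + qSeminorm φm m v :=
          qSeminorm_add_le _ _ _ _
            (((hu (ψ j)).of_le (by exact_mod_cast Nat.le_succ m)).sub hv) hv
      _ ≤ 1 + qSeminorm φm m v :=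
          add_le_add_left (le_of_lt (hJ j (le_max_right n J))) _
  have hlt : (n : ENNReal) < qSeminorm φm m (u (ψ j)) := by
    calc (n : ENNReal) ≤ (ψ j : ENNReal) := by
          exact_mod_cast le_trans (le_max_left n J) hψ.le_apply
      _ < _ := h2 (ψ j)
  exact absurd (lt_of_lt_of_le hlt hbound) (not_lt.mpr (le_of_lt hn))

lemma qSeminorm_bound_scaled (φm φm1 : ℝ → ℝ) (m : ℕ) (C : ENNReal)
    (hbound : ∀ u : ℝ → ℂ, ContDiff ℝ (m+1) u →
      qSeminorm φm1 (m+1) u ≤ 1 → qSeminorm φm m u ≤ C)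
    (u : ℝ → ℂ) (hu : ContDiff ℝ (m+1) u) {t : ℝ} (ht : 0 < t)
    (hq : qSeminorm φm1 (m+1) u ≤ ENNReal.ofReal t) :
    qSeminorm φm m u ≤ C * ENNReal.ofReal t := by
  set w : ℝ → ℂ := fun x => t⁻¹ • u x with hw
  have hwc : ContDiff ℝ (m+1) w := hu.const_smul t⁻¹
  have hq1 : qSeminorm φm1 (m+1) w ≤ 1 := by
    rw [hw, qSeminorm_smul φm1 (m+1) (inv_nonneg.mpr ht.le) u hu]
    calc ENNReal.ofReal t⁻¹ * qSeminorm φm1 (m+1) u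
        ≤ ENNReal.ofReal t⁻¹ * ENNReal.ofReal t := by gcongr
      _ = ENNReal.ofReal (t⁻¹ * t) := (ENNReal.ofReal_mul (inv_nonneg.mpr ht.le)).symm
      _ = 1 := by rw [inv_mul_cancel₀ ht.ne']; simp
  have hue : u = fun x => t • w x := by
    funext x
    rw [hw]
    rw [smul_smul, mul_inv_cancel₀ ht.ne', one_smul]
  calc qSeminorm φm m u = ENNReal.ofReal t * qSeminorm φm m w := by
        rw [hue, qSeminorm_smul φm m ht.le w
          (hwc.of_le (by exact_mod_cast Nat.le_succ m))]
    _ ≤ ENNReal.ofReal t * C := by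
        gcongr
        exact hbound w hwc hq1
    _ = C * ENNReal.ofReal t := mul_comm _ _

lemma ennreal_split (g : ℕ → ENNReal) (K : ℕ) :
    ∑' k, g k = (∑ k ∈ Finset.range K, g k) + ∑' i, g (i + K) :=
  (HasSum.sum_range_add (f := g) (k := K) ENNReal.summable.hasSum).tsum_eq


/-- The weighted norm `p(f) = Σ_k c_k q_{φ,m}(f_k)` on sequences `f = (f_1, f_2, …)` of
functions on `ℝ`, valued in `ℝ≥0∞`. -/
noncomputable def pNorm (c : ℕ → ℝ) (φ : ℝ → ℝ) (m : ℕ) (f : ℕ → ℝ → ℂ) : ENNReal :=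
  ∑' k : ℕ, ENNReal.ofReal (c k) * qSeminorm φ m (f k)

set_option maxHeartbeats 1000000 in
/-- Suppose the unit ball of `q_{φ_{m+1},m+1}` (on `C^{m+1}` functions) is relatively
compact for `q_{φ_m,m}`; let `(c_k)`, `(c'_k)` be positive sequences with
`Σ c_k / c'_k < ∞`, and let `p_m`, `p_{m+1}` be the corresponding weighted sequence-space
norms. Then every sequence of elements of `T_{m+1}` lying in the ball of radius `r` of
`p_{m+1}` admits a subsequence that is Cauchy for `p_m`: the embedding `T_{m+1} → T_m`
is completely continuous. -/
theorem sequence_space_embedding_completely_continuous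
    (φm φm1 : ℝ → ℝ) (hφm : Continuous φm) (hφm1 : Continuous φm1) (m : ℕ)
    (hcompact : ∀ u : ℕ → ℝ → ℂ,
      (∀ j, ContDiff ℝ (m + 1) (u j)) →
      (∀ j, qSeminorm φm1 (m + 1) (u j) ≤ 1) →
      ∃ ψ : ℕ → ℕ, StrictMono ψ ∧ ∃ v : ℝ → ℂ, ContDiff ℝ m v ∧
        qSeminorm φm m v < ⊤ ∧
        Tendsto (fun j => qSeminorm φm m (fun x => u (ψ j) x - v x)) atTop (nhds 0))
    (c c' : ℕ → ℝ) (hc : ∀ k, 0 < c k) (hc' : ∀ k, 0 < c' k)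
    (hsum : Summable fun k => c k / c' k) :
    ∀ r : ℝ, 0 < r → ∀ F : ℕ → ℕ → ℝ → ℂ,
      (∀ j k, ContDiff ℝ (m + 1) (F j k)) →
      (∀ j, pNorm c' φm1 (m + 1) (F j) ≤ ENNReal.ofReal r) →
      ∃ ψ : ℕ → ℕ, StrictMono ψ ∧
        ∀ ε : ENNReal, 0 < ε → ∃ J : ℕ, ∀ j₁, J ≤ j₁ → ∀ j₂, J ≤ j₂ →
          pNorm c φm m (fun k x => F (ψ j₁) k x - F (ψ j₂) k x) < ε := by
  intro r hr F hF hFr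
  obtain ⟨C, hCtop, hC⟩ := exists_embedding_bound φm φm1 m hcompact
  -- per-k bound on the (m+1)-seminorm
  have hq1 : ∀ j k, qSeminorm φm1 (m+1) (F j k) ≤ ENNReal.ofReal (r / c' k) := by
    intro j k
    have hterm : ENNReal.ofReal (c' k) * qSeminorm φm1 (m+1) (F j k) ≤ ENNReal.ofReal r :=
      le_trans (ENNReal.le_tsum k) (hFr j)
    have h0 : ENNReal.ofReal (c' k) ≠ 0 := (ENNReal.ofReal_pos.mpr (hc' k)).ne'
    rw [ENNReal.ofReal_div_of_pos (hc' k),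
      ENNReal.le_div_iff_mul_le (Or.inl h0) (Or.inl ENNReal.ofReal_ne_top)]
    rw [mul_comm]
    exact hterm
  -- per-k bound on the m-seminorm
  have hqm : ∀ j k, qSeminorm φm m (F j k) ≤ C * ENNReal.ofReal (r / c' k) := fun j k =>
    qSeminorm_bound_scaled φm φm1 m C hC (F j k) (hF j k) (div_pos hr (hc' k)) (hq1 j k)
  -- key per-coordinate extraction
  have key : ∀ k (θ : ℕ → ℕ), StrictMono θ → ∃ σ : ℕ → ℕ, StrictMono σ ∧
      ∀ ε : ENNReal, 0 < ε → ∃ J, ∀ j₁, J ≤ j₁ → ∀ j₂, J ≤ j₂ →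
        qSeminorm φm m (fun x => F ((fun j => θ (σ j)) j₁) k x
          - F ((fun j => θ (σ j)) j₂) k x) < ε := by
    intro k θ hθ
    set s : ℝ := c' k / r with hs
    have hs0 : 0 < s := div_pos (hc' k) hr
    set u : ℕ → ℝ → ℂ := fun j x => s • F (θ j) k x with hu
    have huc : ∀ j, ContDiff ℝ (m+1) (u j) := fun j => (hF (θ j) k).const_smul s
    have hub : ∀ j, qSeminorm φm1 (m+1) (u j) ≤ 1 := by
      intro j
      calc qSeminorm φm1 (m+1) (u j)
          = ENNReal.ofReal s * qSeminorm φm1 (m+1) (F (θ j) k) :=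
            qSeminorm_smul _ _ hs0.le _ (hF _ k)
        _ ≤ ENNReal.ofReal s * ENNReal.ofReal (r / c' k) := by
            gcongr; exact hq1 _ k
        _ = ENNReal.ofReal (s * (r / c' k)) := (ENNReal.ofReal_mul hs0.le).symm
        _ = 1 := by
            rw [hs, show c' k / r * (r / c' k) = 1 by
              rw [div_mul_div_comm, mul_comm (c' k) r]
              exact div_self (mul_pos hr (hc' k)).ne']
            simp
    obtain ⟨σ, hσ, v, hv, hvfin, htend⟩ := hcompact u huc hub
    refine ⟨σ, hσ, ?_⟩
    intro ε hε
    set A : ENNReal := ENNReal.ofReal (r / c' k) with hA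
    have hA0 : A ≠ 0 := (ENNReal.ofReal_pos.mpr (div_pos hr (hc' k))).ne'
    have hAt : A ≠ ⊤ := ENNReal.ofReal_ne_top
    obtain ⟨δ, hδ0, hδ⟩ : ∃ δ : ENNReal, 0 < δ ∧ A * (δ + δ) < ε := by
      rcases eq_or_ne ε ⊤ with he | he
      · refine ⟨1, zero_lt_one, ?_⟩
        rw [he]
        exact (ENNReal.mul_ne_top hAt (by norm_num)).lt_top
      · refine ⟨(ε/2) / (2*A), ENNReal.div_pos (ENNReal.half_pos hε.ne').ne'
          (ENNReal.mul_ne_top (by norm_num) hAt), ?_⟩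
        calc A * ((ε/2)/(2*A) + (ε/2)/(2*A)) = (2*A) * ((ε/2)/(2*A)) := by ring
          _ = ε/2 := ENNReal.mul_div_cancel (by simp [hA0]) (ENNReal.mul_ne_top (by norm_num) hAt)
          _ < ε := ENNReal.half_lt_self hε.ne' he
    obtain ⟨J, hJ⟩ := eventually_atTop.mp (htend.eventually_lt_const hδ0)
    refine ⟨J, ?_⟩
    intro j₁ h₁ j₂ h₂
    simp only
    have hdc : ∀ j, ContDiff ℝ m (fun x => u (σ j) x - v x) :=
      fun j => ((huc (σ j)).of_le (by exact_mod_cast Nat.le_succ m)).sub hv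
    have hdc2 : ContDiff ℝ m (fun x => u (σ j₁) x - u (σ j₂) x) :=
      ((huc (σ j₁)).of_le (by exact_mod_cast Nat.le_succ m)).sub
        ((huc (σ j₂)).of_le (by exact_mod_cast Nat.le_succ m))
    have heq : (fun x => F (θ (σ j₁)) k x - F (θ (σ j₂)) k x)
        = fun x => (r / c' k) • (u (σ j₁) x - u (σ j₂) x) := by
      funext x
      rw [hu]
      simp only [smul_sub, smul_smul]
      rw [show r / c' k * s = 1 by
        rw [hs, div_mul_div_comm, mul_comm (c' k) r]
        exact div_self (mul_pos hr (hc' k)).ne']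
      simp
    calc qSeminorm φm m (fun x => F (θ (σ j₁)) k x - F (θ (σ j₂)) k x)
        = A * qSeminorm φm m (fun x => u (σ j₁) x - u (σ j₂) x) := by
          rw [heq, qSeminorm_smul _ _ (div_pos hr (hc' k)).le _ hdc2, hA]
      _ ≤ A * (qSeminorm φm m (fun x => u (σ j₁) x - v x)
            + qSeminorm φm m (fun x => u (σ j₂) x - v x)) := by
          gcongr
          have hsplit : (fun x => u (σ j₁) x - u (σ j₂) x)
              = fun x => (u (σ j₁) x - v x) + (v x - u (σ j₂) x) := by
            funext x; ring
          rw [hsplit]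
          have hneg : qSeminorm φm m (fun x => v x - u (σ j₂) x)
              = qSeminorm φm m (fun x => u (σ j₂) x - v x) := by
            rw [show (fun x => v x - u (σ j₂) x) = fun x => -(u (σ j₂) x - v x) by
              funext x; ring]
            exact qSeminorm_neg _ _ _
          calc qSeminorm φm m (fun x => (u (σ j₁) x - v x) + (v x - u (σ j₂) x))
              ≤ qSeminorm φm m (fun x => u (σ j₁) x - v x)
                + qSeminorm φm m (fun x => v x - u (σ j₂) x) :=
                qSeminorm_add_le _ _ _ _ (hdc j₁)
                  (hv.sub ((huc (σ j₂)).of_le (by exact_mod_cast Nat.le_succ m)))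
            _ = _ := by rw [hneg]
      _ ≤ A * (δ + δ) := by
          gcongr
          · exact (hJ j₁ h₁).le
          · exact (hJ j₂ h₂).le
      _ < ε := hδ
  -- diagonal extraction
  obtain ⟨ψ, hψm, hψ⟩ := exists_diagonal
    (fun k θ => ∀ ε : ENNReal, 0 < ε → ∃ J, ∀ j₁, J ≤ j₁ → ∀ j₂, J ≤ j₂ →
      qSeminorm φm m (fun x => F (θ j₁) k x - F (θ j₂) k x) < ε) key
  refine ⟨ψ, hψm, ?_⟩
  have hψC : ∀ k (ε : ENNReal), 0 < ε → ∃ J, ∀ j₁, J ≤ j₁ → ∀ j₂, J ≤ j₂ →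
      qSeminorm φm m (fun x => F (ψ j₁) k x - F (ψ j₂) k x) < ε := by
    intro k ε hε
    obtain ⟨θ, hPθ, hrep⟩ := hψ k
    obtain ⟨J, hJ⟩ := hPθ ε hε
    refine ⟨max J k, ?_⟩
    intro j₁ h₁ j₂ h₂
    obtain ⟨i₁, hi₁, he₁⟩ := hrep j₁ (le_trans (le_max_right J k) h₁)
    obtain ⟨i₂, hi₂, he₂⟩ := hrep j₂ (le_trans (le_max_right J k) h₂)
    rw [he₁, he₂]
    exact hJ i₁ (le_trans (le_trans (le_max_left J k) h₁) hi₁)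
      i₂ (le_trans (le_trans (le_max_left J k) h₂) hi₂)
  -- final estimate
  intro ε hε
  set δ : ENNReal := min ε 1 with hδdef
  have hδ0 : 0 < δ := lt_min hε zero_lt_one
  have hδtop : δ ≠ ⊤ := ne_top_of_le_ne_top (by norm_num) (min_le_right ε 1)
  have hδε : δ ≤ ε := min_le_left ε 1
  set A : ENNReal := 2 * C * ENNReal.ofReal r with hAdef
  have hAt : A ≠ ⊤ := ENNReal.mul_ne_top (ENNReal.mul_ne_top (by norm_num) hCtop)
    ENNReal.ofReal_ne_top
  have htail_term : ∀ j₁ j₂ k, ENNReal.ofReal (c k)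
      * qSeminorm φm m (fun x => F j₁ k x - F j₂ k x) ≤ A * ENNReal.ofReal (c k / c' k) := by
    intro j₁ j₂ k
    calc ENNReal.ofReal (c k) * qSeminorm φm m (fun x => F j₁ k x - F j₂ k x)
        ≤ ENNReal.ofReal (c k)
          * (C * ENNReal.ofReal (r / c' k) + C * ENNReal.ofReal (r / c' k)) := by
          gcongr
          calc qSeminorm φm m (fun x => F j₁ k x - F j₂ k x)
              ≤ qSeminorm φm m (F j₁ k) + qSeminorm φm m (F j₂ k) :=
                qSeminorm_sub_le _ _ _ _
                  ((hF j₁ k).of_le (by exact_mod_cast Nat.le_succ m))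
                  ((hF j₂ k).of_le (by exact_mod_cast Nat.le_succ m))
            _ ≤ _ := add_le_add (hqm j₁ k) (hqm j₂ k)
      _ = A * ENNReal.ofReal (c k / c' k) := by
          rw [show ENNReal.ofReal (c k)
              * (C * ENNReal.ofReal (r / c' k) + C * ENNReal.ofReal (r / c' k))
              = 2 * C * (ENNReal.ofReal (c k) * ENNReal.ofReal (r / c' k)) by ring,
            ← ENNReal.ofReal_mul (hc k).le,
            show c k * (r / c' k) = r * (c k / c' k) by ring,
            ENNReal.ofReal_mul hr.le, hAdef]
          ring
  -- choose K so that the tail is small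
  have htailtend : Tendsto (fun K => A * ENNReal.ofReal (∑' i, c (i + K) / c' (i + K)))
      atTop (nhds 0) := by
    have h1 : Tendsto (fun K => ∑' i, c (i + K) / c' (i + K)) atTop (nhds 0) := by
      exact _root_.tendsto_sum_nat_add (fun k => c k / c' k)
    have h2 := ENNReal.tendsto_ofReal h1
    have h3 := ENNReal.Tendsto.const_mul h2 (Or.inr hAt)
    simpa using h3
  obtain ⟨K, hK⟩ := (htailtend.eventually_lt_const (ENNReal.half_pos hδ0.ne')).exists
  set η : ENNReal := (δ/2) / (K+1) with hηdef
  have hη0 : 0 < η := ENNReal.div_pos (ENNReal.half_pos hδ0.ne').ne'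
    (by exact_mod_cast ENNReal.natCast_ne_top (K+1))
  have hck : ∀ k : ℕ, (0:ENNReal) < η / ENNReal.ofReal (c k) :=
    fun k => ENNReal.div_pos hη0.ne' ENNReal.ofReal_ne_top
  choose Jf hJf using fun k => hψC k (η / ENNReal.ofReal (c k)) (hck k)
  set J := (Finset.range K).sup Jf with hJdef
  refine ⟨J, ?_⟩
  intro j₁ h₁ j₂ h₂
  have hsplit : pNorm c φm m (fun k x => F (ψ j₁) k x - F (ψ j₂) k x)
      = (∑ k ∈ Finset.range K, ENNReal.ofReal (c k)
          * qSeminorm φm m (fun x => F (ψ j₁) k x - F (ψ j₂) k x))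
        + ∑' i, ENNReal.ofReal (c (i + K))
          * qSeminorm φm m (fun x => F (ψ j₁) (i + K) x - F (ψ j₂) (i + K) x) := by
    rw [pNorm]
    exact ennreal_split _ K
  rw [hsplit]
  have hfin : (∑ k ∈ Finset.range K, ENNReal.ofReal (c k)
      * qSeminorm φm m (fun x => F (ψ j₁) k x - F (ψ j₂) k x)) ≤ δ/2 := by
    calc (∑ k ∈ Finset.range K, ENNReal.ofReal (c k)
        * qSeminorm φm m (fun x => F (ψ j₁) k x - F (ψ j₂) k x))
        ≤ ∑ _k ∈ Finset.range K, η := by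
          refine Finset.sum_le_sum fun k hk => ?_
          have hJk : Jf k ≤ J := Finset.le_sup hk
          have := hJf k j₁ (le_trans hJk h₁) j₂ (le_trans hJk h₂)
          calc ENNReal.ofReal (c k)
              * qSeminorm φm m (fun x => F (ψ j₁) k x - F (ψ j₂) k x)
              ≤ ENNReal.ofReal (c k) * (η / ENNReal.ofReal (c k)) := by gcongr <;> exact this.le
            _ ≤ η := ENNReal.mul_div_le
      _ = (K : ENNReal) * η := by
          rw [Finset.sum_const, Finset.card_range, nsmul_eq_mul]
      _ ≤ ((K : ENNReal) + 1) * η := mul_le_mul_left le_self_add η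
      _ ≤ δ/2 := by
          rw [hηdef]
          exact ENNReal.mul_div_le
  have htail : (∑' i, ENNReal.ofReal (c (i + K))
      * qSeminorm φm m (fun x => F (ψ j₁) (i + K) x - F (ψ j₂) (i + K) x)) < δ/2 := by
    calc (∑' i, ENNReal.ofReal (c (i + K))
        * qSeminorm φm m (fun x => F (ψ j₁) (i + K) x - F (ψ j₂) (i + K) x))
        ≤ ∑' i, A * ENNReal.ofReal (c (i + K) / c' (i + K)) :=
          ENNReal.tsum_le_tsum fun i => htail_term (ψ j₁) (ψ j₂) (i + K)
      _ = A * ∑' i, ENNReal.ofReal (c (i + K) / c' (i + K)) := ENNReal.tsum_mul_left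
      _ = A * ENNReal.ofReal (∑' i, c (i + K) / c' (i + K)) := by
          rw [ENNReal.ofReal_tsum_of_nonneg
            (fun i => div_nonneg (hc _).le (hc' _).le)
            (by exact (summable_nat_add_iff K).mpr hsum)]
      _ < δ/2 := hK
  calc (∑ k ∈ Finset.range K, ENNReal.ofReal (c k)
      * qSeminorm φm m (fun x => F (ψ j₁) k x - F (ψ j₂) k x))
      + (∑' i, ENNReal.ofReal (c (i + K))
        * qSeminorm φm m (fun x => F (ψ j₁) (i + K) x - F (ψ j₂) (i + K) x))
      < δ/2 + δ/2 :=
        ENNReal.add_lt_add_of_le_of_lt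
          (ne_top_of_le_ne_top (ENNReal.div_lt_top hδtop (by norm_num)).ne hfin)
          hfin htail
    _ = δ := ENNReal.add_halves δ
    _ ≤ ε := hδε
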